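/- Let (S,s) be a finite bijective set-theoretic solution to the Pentagon Equation. Then there exist finite groups A and G, a left action σ of A on G by permutations and a right action δ of G on A by permutations making (A,G,σ,δ) a matched pair of groups, a nonempty finite set X, permutations φ_a of X for each a ∈ A, and a bijection F : S → X × A × G such that (F × F) ∘ s = s' ∘ (F × F), where s'((α,a,x),(β,b,y)) = ((α, a, xy), (φ⁻¹_{b(δ_x(a))⁻¹}(φ_b(β)), b(δ_x(a))⁻¹, σ_{δ_x(a)}(y))). That is, every finite bijective solution to the Pentagon Equation is isomorphic to an extension of the solution associated to a matched pair of groups. -/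

import Mathlib

namespace PE

/-- `s` applied to components 1,2 of a triple. -/
def s12 {S : Type*} (s : S × S → S × S) : S × S × S → S × S × S :=
  fun p => ((s (p.1, p.2.1)).1, (s (p.1, p.2.1)).2, p.2.2)

/-- `s` applied to components 1,3 of a triple. -/
def s13 {S : Type*} (s : S × S → S × S) : S × S × S → S × S × S :=
  fun p => ((s (p.1, p.2.2)).1, p.2.1, (s (p.1, p.2.2)).2)

/-- `s` applied to components 2,3 of a triple. -/
def s23 {S : Type*} (s : S × S → S × S) : S × S × S → S × S × S :=
  fun p => (p.1, s (p.2.1, p.2.2))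

/-- `(S, s)` is a set-theoretic solution to the Pentagon Equation:
`s₂₃ ∘ s₁₃ ∘ s₁₂ = s₁₂ ∘ s₂₃`. -/
def IsPE {S : Type*} (s : S × S → S × S) : Prop :=
  s23 s ∘ s13 s ∘ s12 s = s12 s ∘ s23 s

/-- The induced binary operation `x · y`: the first component of `s (x, y)`. -/
def mul {S : Type*} (s : S × S → S × S) (x y : S) : S := (s (x, y)).1

/-- The map `θ_x`: `theta s x y = θ_x(y)` is the second component of `s (x, y)`. -/
def theta {S : Type*} (s : S × S → S × S) (x y : S) : S := (s (x, y)).2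

section Basic

variable {S : Type*} (s : S × S → S × S)

lemma s_eq (x y : S) : s (x, y) = (mul s x y, theta s x y) := by
  simp [mul, theta]

lemma pe_point (hPE : IsPE s) (x y z : S) :
    s23 s (s13 s (s12 s (x, y, z))) = s12 s (s23 s (x, y, z)) :=
  congrFun hPE (x, y, z)

lemma pe_mul (hPE : IsPE s) (x y z : S) : mul s (mul s x y) z = mul s x (mul s y z) := by
  have h := pe_point s hPE x y z
  simpa [s12, s13, s23, mul, theta, Prod.ext_iff] using congrArg (fun p => p.1) h

lemma pe_B (hPE : IsPE s) (x y z : S) :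
    mul s (theta s x y) (theta s (mul s x y) z) = theta s x (mul s y z) := by
  have h := pe_point s hPE x y z
  simpa [s12, s13, s23, mul, theta, Prod.ext_iff] using congrArg (fun p => p.2.1) h

lemma pe_C (hPE : IsPE s) (x y z : S) :
    theta s (theta s x y) (theta s (mul s x y) z) = theta s y z := by
  have h := pe_point s hPE x y z
  simpa [s12, s13, s23, mul, theta, Prod.ext_iff] using congrArg (fun p => p.2.2) h

/-- the inverse of `s` as a function. -/
noncomputable def sinv (hbij : Function.Bijective s) : S × S → S × S := (Equiv.ofBijective s hbij).symm

lemma s_sinv (hbij : Function.Bijective s) (p : S × S) : s (sinv s hbij p) = p :=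
  (Equiv.ofBijective s hbij).apply_symm_apply p

lemma sinv_s (hbij : Function.Bijective s) (p : S × S) : sinv s hbij (s p) = p :=
  (Equiv.ofBijective s hbij).symm_apply_apply p

/-- `ihat v u` is `θ̂_v(u)`. -/
noncomputable def ihat (hbij : Function.Bijective s) (v u : S) : S := (sinv s hbij (u, v)).1

/-- `od v u` is `v ∘ u`, the dual multiplication. -/
noncomputable def od (hbij : Function.Bijective s) (v u : S) : S := (sinv s hbij (u, v)).2

lemma sinv_eq (hbij : Function.Bijective s) (u v : S) : sinv s hbij (u, v) = (ihat s hbij v u, od s hbij v u) := by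
  simp [ihat, od]

lemma Dstar (hbij : Function.Bijective s) (v u : S) : mul s (ihat s hbij v u) (od s hbij v u) = u := by
  have := s_sinv s hbij (u, v)
  rw [sinv_eq] at this
  simpa [mul] using congrArg Prod.fst this

lemma Estar (hbij : Function.Bijective s) (v u : S) : theta s (ihat s hbij v u) (od s hbij v u) = v := by
  have := s_sinv s hbij (u, v)
  rw [sinv_eq] at this
  simpa [theta] using congrArg Prod.snd this

lemma Did (hbij : Function.Bijective s) (x y : S) : od s hbij (theta s x y) (mul s x y) = y := by
  have := sinv_s s hbij (x, y)
  rw [s_eq s x y, sinv_eq] at this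
  simpa using congrArg Prod.snd this

lemma Eid (hbij : Function.Bijective s) (x y : S) : ihat s hbij (theta s x y) (mul s x y) = x := by
  have := sinv_s s hbij (x, y)
  rw [s_eq s x y, sinv_eq] at this
  simpa using congrArg Prod.fst this

/-- if `s (x,y) = (u,v)` then `x = ihat v u` and `y = od v u` -/
lemma sinv_char (hbij : Function.Bijective s) (x y u v : S) (h1 : mul s x y = u) (h2 : theta s x y = v) :
    ihat s hbij v u = x ∧ od s hbij v u = y := by
  have := sinv_s s hbij (x, y)
  rw [s_eq s x y, h1, h2, sinv_eq] at this
  exact ⟨congrArg Prod.fst this, congrArg Prod.snd this⟩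

/-- the composition rule (Comp): `θ_v ∘ θ_u = θ_{v∘u}`. -/
lemma comp_rule (hPE : IsPE s) (hbij : Function.Bijective s) (u v z : S) :
    theta s v (theta s u z) = theta s (od s hbij v u) z := by
  have h3 := pe_C s hPE (ihat s hbij v u) (od s hbij v u) z
  rwa [Dstar, Estar] at h3

/-- (★M): `θ_{x·p}(q) = θ_p(q) ∘ θ_x(p·q)`. -/
lemma starM (hPE : IsPE s) (hbij : Function.Bijective s) (x p q : S) :
    theta s (mul s x p) q
      = od s hbij (theta s p q) (theta s x (mul s p q)) := by
  have h := sinv_char s hbij (theta s x p) (theta s (mul s x p) q)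
      (theta s x (mul s p q)) (theta s p q) (pe_B s hPE x p q) (pe_C s hPE x p q)
  exact h.2.symm

end Basic

section Dual

variable {S : Type*} (s : S × S → S × S)

/-- the dual solution `ŝ = τ ∘ s⁻¹ ∘ τ`. -/
noncomputable def dual (hbij : Function.Bijective s) : S × S → S × S :=
  fun p => ((sinv s hbij (p.2, p.1)).2, (sinv s hbij (p.2, p.1)).1)

/-- explicit inverse of the dual. -/
def dualInv : S × S → S × S := fun p => ((s (p.2, p.1)).2, (s (p.2, p.1)).1)

variable (hbij : Function.Bijective s)

lemma dual_dualInv (p : S × S) : dual s hbij (dualInv s p) = p := by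
  have h : sinv s hbij ((s (p.2, p.1)).1, (s (p.2, p.1)).2) = (p.2, p.1) := by
    have := sinv_s s hbij (p.2, p.1); simpa using this
  simp only [dual, dualInv, h]

lemma dualInv_dual (p : S × S) : dualInv s (dual s hbij p) = p := by
  have h : s ((sinv s hbij (p.2, p.1)).1, (sinv s hbij (p.2, p.1)).2) = (p.2, p.1) := by
    have := s_sinv s hbij (p.2, p.1); simpa using this
  simp only [dual, dualInv, h]

lemma dual_bij : Function.Bijective (dual s hbij) :=
  Function.bijective_iff_has_inverse.2
    ⟨dualInv s, fun p => dualInv_dual s hbij p, fun p => dual_dualInv s hbij p⟩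

lemma dual_mul (x y : S) : mul (dual s hbij) x y = od s hbij x y := rfl
lemma dual_theta (x y : S) : theta (dual s hbij) x y = ihat s hbij x y := rfl

lemma sinv_dual (p : S × S) : sinv (dual s hbij) (dual_bij s hbij) p = dualInv s p := by
  apply (dual_bij s hbij).1
  rw [s_sinv (dual s hbij) (dual_bij s hbij) p, dual_dualInv]

lemma dual_ihat (v u : S) : ihat (dual s hbij) (dual_bij s hbij) v u = theta s v u := by
  simp [ihat, sinv_dual, dualInv, theta]

lemma dual_od (v u : S) : od (dual s hbij) (dual_bij s hbij) v u = mul s v u := by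
  simp [od, sinv_dual, dualInv, mul]

/-- the triple flip. -/
def rho : S × S × S → S × S × S := fun p => (p.2.2, p.2.1, p.1)

/-- swap-conjugation of a pair map. -/
def swc (f : S × S → S × S) : S × S → S × S := fun p => ((f (p.2, p.1)).2, (f (p.2, p.1)).1)

lemma conj12 (f : S × S → S × S) (p : S × S × S) :
    rho (s12 f (rho p)) = s23 (swc f) p := rfl
lemma conj23 (f : S × S → S × S) (p : S × S × S) :
    rho (s23 f (rho p)) = s12 (swc f) p := rfl
lemma conj13 (f : S × S → S × S) (p : S × S × S) :
    rho (s13 f (rho p)) = s13 (swc f) p := rfl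

lemma rho_rho (p : S × S × S) : rho (rho p) = p := rfl

lemma swc_sinv : swc (sinv s hbij) = dual s hbij := rfl

lemma inv12  (p : S × S × S) : s12 s (s12 (sinv s hbij) p) = p := by
  have h : s ((sinv s hbij (p.1, p.2.1)).1, (sinv s hbij (p.1, p.2.1)).2) = (p.1, p.2.1) := by
    have := s_sinv s hbij (p.1, p.2.1); simpa using this
  simp only [s12, h]
lemma inv12' (p : S × S × S) : s12 (sinv s hbij) (s12 s p) = p := by
  have h : sinv s hbij ((s (p.1, p.2.1)).1, (s (p.1, p.2.1)).2) = (p.1, p.2.1) := by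
    have := sinv_s s hbij (p.1, p.2.1); simpa using this
  simp only [s12, h]
lemma inv13  (p : S × S × S) : s13 s (s13 (sinv s hbij) p) = p := by
  have h : s ((sinv s hbij (p.1, p.2.2)).1, (sinv s hbij (p.1, p.2.2)).2) = (p.1, p.2.2) := by
    have := s_sinv s hbij (p.1, p.2.2); simpa using this
  simp only [s13, h]
lemma inv23  (p : S × S × S) : s23 s (s23 (sinv s hbij) p) = p := by
  have h : s ((sinv s hbij (p.2.1, p.2.2)).1, (sinv s hbij (p.2.1, p.2.2)).2) = (p.2.1, p.2.2) := by
    have := s_sinv s hbij (p.2.1, p.2.2); simpa using this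
  simp only [s23, h]
lemma inv13' (p : S × S × S) : s13 (sinv s hbij) (s13 s p) = p := by
  have h : sinv s hbij ((s (p.1, p.2.2)).1, (s (p.1, p.2.2)).2) = (p.1, p.2.2) := by
    have := sinv_s s hbij (p.1, p.2.2); simpa using this
  simp only [s13, h]
lemma inv23' (p : S × S × S) : s23 (sinv s hbij) (s23 s p) = p := by
  have h : sinv s hbij ((s (p.2.1, p.2.2)).1, (s (p.2.1, p.2.2)).2) = (p.2.1, p.2.2) := by
    have := sinv_s s hbij (p.2.1, p.2.2); simpa using this
  simp only [s23, h]

lemma s13s_inj (hbij : Function.Bijective s) : Function.Injective (fun p => s23 s (s13 s (s12 s p))) := by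
  intro p q h
  simp only [] at h
  have h2 := congrArg (s23 (sinv s hbij)) h
  rw [inv23' s hbij, inv23' s hbij] at h2
  have h3 := congrArg (s13 (sinv s hbij)) h2
  rw [inv13' s hbij, inv13' s hbij] at h3
  have h4 := congrArg (s12 (sinv s hbij)) h3
  rwa [inv12' s hbij, inv12' s hbij] at h4

/-- inverse pentagon identity. -/
lemma pe_inv (hPE : IsPE s) (p : S × S × S) :
    s12 (sinv s hbij) (s13 (sinv s hbij) (s23 (sinv s hbij) p))
      = s23 (sinv s hbij) (s12 (sinv s hbij) p) := by
  apply s13s_inj s hbij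
  show s23 s (s13 s (s12 s _)) = s23 s (s13 s (s12 s _))
  rw [inv12 s hbij, inv13 s hbij, inv23 s hbij]
  have hq := pe_point s hPE ((s23 (sinv s hbij) (s12 (sinv s hbij) p)).1)
      ((s23 (sinv s hbij) (s12 (sinv s hbij) p)).2.1)
      ((s23 (sinv s hbij) (s12 (sinv s hbij) p)).2.2)
  simp only [Prod.mk.eta] at hq
  rw [hq, inv23 s hbij, inv12 s hbij]

lemma dual_isPE (hPE : IsPE s) : IsPE (dual s hbij) := by
  funext p
  show s23 (dual s hbij) (s13 (dual s hbij) (s12 (dual s hbij) p))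
      = s12 (dual s hbij) (s23 (dual s hbij) p)
  rw [← swc_sinv s hbij]
  rw [← conj12 (S := S) (sinv s hbij), ← conj23 (S := S) (sinv s hbij),
      ← conj13 (S := S) (sinv s hbij)]
  rw [rho_rho, rho_rho]
  rw [pe_inv s hbij hPE]
  rfl

end Dual

section Iterates

variable {S : Type*} (s : S × S → S × S)

lemma iter_id [Finite S] (hbij : Function.Bijective s) :
    ∃ n, 2 ≤ n ∧ ∀ p : S × S, s^[n] p = p := by
  classical
  let P : Equiv.Perm (S × S) := Equiv.ofBijective s hbij
  have hpow : ∀ (m : ℕ) (p : S × S), (P ^ m) p = s^[m] p := by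
    intro m
    induction m with
    | zero => intro p; simp
    | succ k ih =>
      intro p
      rw [pow_succ, Equiv.Perm.mul_apply, Function.iterate_succ_apply]
      have : P p = s p := rfl
      rw [this, ih (s p)]
  refine ⟨2 * orderOf P, ?_, ?_⟩
  · have h1 : 0 < orderOf P := orderOf_pos P
    omega
  · intro p
    have : P ^ (2 * orderOf P) = 1 := by
      rw [mul_comm, pow_mul, pow_orderOf_eq_one, one_pow]
    rw [← hpow, this]
    rfl

lemma iter_fst1 (hPE : IsPE s) (k : ℕ) (x y : S) : ∃ t, (s^[k + 1] (x, y)).1 = mul s x t := by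
  induction k with
  | zero => exact ⟨y, rfl⟩
  | succ m ih =>
    obtain ⟨t, ht⟩ := ih
    refine ⟨mul s t (s^[m + 1] (x, y)).2, ?_⟩
    rw [Function.iterate_succ_apply']
    show mul s (s^[m+1] (x,y)).1 (s^[m+1] (x,y)).2 = _
    rw [ht, pe_mul s hPE]

lemma iter_fst2 (hPE : IsPE s) (k : ℕ) (x y : S) :
    ∃ t, (s^[k + 2] (x, y)).1 = mul s (mul s x y) t := by
  induction k with
  | zero =>
    refine ⟨theta s x y, ?_⟩
    show mul s (s^[1] (x,y)).1 (s^[1] (x,y)).2 = _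
    rfl
  | succ m ih =>
    obtain ⟨t, ht⟩ := ih
    refine ⟨mul s t (s^[m + 2] (x, y)).2, ?_⟩
    rw [Function.iterate_succ_apply']
    show mul s (s^[m+2] (x,y)).1 (s^[m+2] (x,y)).2 = _
    rw [ht, pe_mul s hPE]

lemma iter_snd (hPE : IsPE s) (hbij : Function.Bijective s) (k : ℕ) (x y : S) :
    ∃ c, (s^[k + 1] (x, y)).2 = theta s c y := by
  induction k with
  | zero => exact ⟨x, rfl⟩
  | succ m ih =>
    obtain ⟨c, hc⟩ := ih
    refine ⟨od s hbij (s^[m + 1] (x, y)).1 c, ?_⟩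
    rw [Function.iterate_succ_apply']
    show theta s (s^[m+1] (x,y)).1 (s^[m+1] (x,y)).2 = _
    rw [hc, comp_rule s hPE hbij]

variable [Finite S] [Nonempty S]

/-- every `x` satisfies `x ∈ (xy)S`. -/
lemma div1 (hPE : IsPE s) (hbij : Function.Bijective s) (x y : S) : ∃ t, mul s (mul s x y) t = x := by
  obtain ⟨n, hn2, hn⟩ := iter_id s hbij
  obtain ⟨t, ht⟩ := iter_fst2 s hPE (n - 2) x y
  rw [show n - 2 + 2 = n by omega, hn (x, y)] at ht
  exact ⟨t, ht.symm⟩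

/-- every `x` satisfies `x ∈ xS`. -/
lemma xInxS (hPE : IsPE s) (hbij : Function.Bijective s) (x : S) : ∃ t, mul s x t = x := by
  obtain ⟨y⟩ := (inferInstance : Nonempty S)
  obtain ⟨t, ht⟩ := div1 s hPE hbij x y
  exact ⟨mul s y t, by rw [← pe_mul s hPE, ht]⟩

/-- every `y` has a `θ`-fixer. -/
lemma fixTheta (hPE : IsPE s) (hbij : Function.Bijective s) (y : S) : ∃ c, theta s c y = y := by
  obtain ⟨n, hn2, hn⟩ := iter_id s hbij
  obtain ⟨x⟩ := (inferInstance : Nonempty S)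
  obtain ⟨c, hc⟩ := iter_snd s hPE hbij (n - 1) x y
  rw [show n - 1 + 1 = n by omega, hn (x, y)] at hc
  exact ⟨c, hc.symm⟩

/-- `θ̂_v(u) ∈ uS`. -/
lemma ihat_mem (hPE : IsPE s) (hbij : Function.Bijective s) (v u : S) : ∃ t, mul s u t = ihat s hbij v u := by
  obtain ⟨n, hn2, hn⟩ := iter_id s hbij
  have hsinv : ∀ p, sinv s hbij p = s^[n - 1] p := by
    intro p
    apply hbij.1
    rw [s_sinv s hbij p]
    have h4 : s (s^[n-1] p) = s^[(n-1) + 1] p := (Function.iterate_succ_apply' s (n-1) p).symm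
    have h5 : n - 1 + 1 = n := by omega
    rw [h4, h5, hn]
  obtain ⟨t, ht⟩ := iter_fst1 s hPE (n - 2) u v
  refine ⟨t, ?_⟩
  rw [ihat, hsinv, show n - 1 = n - 2 + 1 by omega, ht]

/-- dictionary: `u ∈ Sy ↔ y ∈ S∘u`. -/
lemma dict1 (hbij : Function.Bijective s) (y u : S) : (∃ t, mul s t y = u) ↔ (∃ w, od s hbij w u = y) := by
  constructor
  · rintro ⟨t, rfl⟩
    exact ⟨theta s t y, Did s hbij t y⟩
  · rintro ⟨w, rfl⟩
    exact ⟨ihat s hbij w u, Dstar s hbij w u⟩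

end Iterates

section Averaging

variable {S : Type*} (s : S × S → S × S) [Fintype S] [DecidableEq S]
variable (hPE : IsPE s) (hbij : Function.Bijective s)

open Finset

/-- `S∘(xy) = S∘y` (as finsets). -/
lemma opXY
    (hod : ∀ a b c : S, od s hbij (od s hbij a b) c = od s hbij a (od s hbij b c))
    (x y : S) :
    image (fun w => od s hbij w (mul s x y)) univ = image (fun w => od s hbij w y) univ := by
  have sub : ∀ a b : S,
      image (fun w => od s hbij w b) univ ⊆ image (fun w => od s hbij w (mul s a b)) univ := by
    intro a b u hu
    obtain ⟨w, -, rfl⟩ := mem_image.1 hu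
    refine mem_image.2 ⟨od s hbij w (theta s a b), mem_univ _, ?_⟩
    rw [hod, Did]
  set F : S → ℕ := fun u => (image (fun w => od s hbij w u) univ).card with hF
  have sumeq : ∑ p : S × S, F p.2 = ∑ p : S × S, F (mul s p.1 p.2) := by
    have h1 : ∑ p : S × S, F (mul s p.1 p.2) = ∑ p : S × S, F (s p).1 := by
      apply Finset.sum_congr rfl
      intro p _
      rfl
    rw [h1]
    have h2 : ∑ p : S × S, F (s p).1 = ∑ p : S × S, F p.1 :=
      Fintype.sum_bijective s hbij _ _ (fun p => rfl)
    rw [h2]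
    rw [Fintype.sum_prod_type, Fintype.sum_prod_type]
    have hL : ∑ a : S, ∑ b : S, F ((a, b) : S × S).2 = Fintype.card S * ∑ b : S, F b := by
      simp [Finset.sum_const, Finset.card_univ]
    have hR : ∑ a : S, ∑ b : S, F ((a, b) : S × S).1 = Fintype.card S * ∑ a : S, F a := by
      simp [Finset.sum_const, Finset.card_univ, Finset.mul_sum]
    rw [hL, hR]
  have hle : ∀ p ∈ (univ : Finset (S × S)), F p.2 ≤ F (mul s p.1 p.2) := by
    intro p _
    exact card_le_card (sub p.1 p.2)
  have hpt := (Finset.sum_eq_sum_iff_of_le hle).1 sumeq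
  have hxy := hpt (x, y) (mem_univ _)
  exact (Finset.eq_of_subset_of_card_le (sub x y) (le_of_eq hxy.symm)).symm

end Averaging

section Structure

variable {S : Type*} [Finite S] [Nonempty S] (s : S × S → S × S)

/-- associativity of the dual operation. -/
lemma odassoc (hPE : IsPE s) (hbij : Function.Bijective s) (a b c : S) :
    od s hbij (od s hbij a b) c = od s hbij a (od s hbij b c) := by
  have h := pe_mul (dual s hbij) (dual_isPE s hbij hPE) a b c
  simpa [dual_mul] using h

/-- `S∘(xy) = S∘y` (membership form). -/
lemma SopXY (hPE : IsPE s) (hbij : Function.Bijective s) (x y u : S) :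
    (∃ w, od s hbij w (mul s x y) = u) ↔ (∃ w, od s hbij w y = u) := by
  classical
  letI : Fintype S := Fintype.ofFinite S
  have h := opXY s hbij (odassoc s hPE hbij) x y
  constructor
  · rintro ⟨w, rfl⟩
    have : od s hbij w (mul s x y) ∈
        Finset.image (fun w => od s hbij w (mul s x y)) Finset.univ :=
      Finset.mem_image.2 ⟨w, Finset.mem_univ _, rfl⟩
    rw [h] at this
    obtain ⟨w', -, hw'⟩ := Finset.mem_image.1 this
    exact ⟨w', hw'⟩
  · rintro ⟨w, rfl⟩
    have : od s hbij w y ∈ Finset.image (fun w => od s hbij w y) Finset.univ :=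
      Finset.mem_image.2 ⟨w, Finset.mem_univ _, rfl⟩
    rw [← h] at this
    obtain ⟨w', -, hw'⟩ := Finset.mem_image.1 this
    exact ⟨w', hw'⟩

/-- dual: `S·(x∘y) = S·y` (membership form). -/
lemma SmulXY (hPE : IsPE s) (hbij : Function.Bijective s) (x y u : S) :
    (∃ w, mul s w (od s hbij x y) = u) ↔ (∃ w, mul s w y = u) := by
  have h := SopXY (dual s hbij) (dual_isPE s hbij hPE) (dual_bij s hbij) x y u
  rw [dual_mul] at h
  simpa [dual_od] using h

/-- `z ∈ S∘z`. -/
lemma zInSopz (hPE : IsPE s) (hbij : Function.Bijective s) (z : S) :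
    ∃ w, od s hbij w z = z := by
  obtain ⟨x⟩ := (inferInstance : Nonempty S)
  exact (SopXY s hPE hbij x z z).1 ⟨theta s x z, Did s hbij x z⟩

/-- `z ∈ Sz`. -/
lemma zInSz (hPE : IsPE s) (hbij : Function.Bijective s) (z : S) :
    ∃ t, mul s t z = z :=
  (dict1 s hbij z z).2 (zInSopz s hPE hbij z)

/-- `S(xy) = Sy` (membership form). -/
lemma SXY (hPE : IsPE s) (hbij : Function.Bijective s) (x y w : S) :
    (∃ t, mul s t (mul s x y) = w) ↔ (∃ t, mul s t y = w) := by
  rw [dict1 s hbij (mul s x y) w, dict1 s hbij y w]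
  constructor
  · rintro ⟨v, hv⟩
    obtain ⟨c, hc⟩ : ∃ c, od s hbij c (mul s x y) = y := ⟨theta s x y, Did s hbij x y⟩
    exact ⟨od s hbij c v, by rw [odassoc s hPE hbij, hv, hc]⟩
  · rintro ⟨v, hv⟩
    obtain ⟨c, hc⟩ := zInSopz s hPE hbij (mul s x y)
    obtain ⟨c', hc'⟩ := (SopXY s hPE hbij x y (mul s x y)).1 ⟨c, hc⟩
    exact ⟨od s hbij c' v, by rw [odassoc s hPE hbij, hv, hc']⟩

/-- `u ∈ Sy → Su = Sy`. -/
lemma SclassEq (hPE : IsPE s) (hbij : Function.Bijective s) {y u : S}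
    (h : ∃ t, mul s t y = u) (w : S) :
    (∃ t, mul s t u = w) ↔ (∃ t, mul s t y = w) := by
  obtain ⟨t, rfl⟩ := h
  exact SXY s hPE hbij t y w

/-- `u ∈ xS → uS = xS`. -/
lemma uSeq (hPE : IsPE s) (hbij : Function.Bijective s) {x u : S}
    (h : ∃ t, mul s x t = u) (w : S) :
    (∃ t, mul s u t = w) ↔ (∃ t, mul s x t = w) := by
  obtain ⟨t, rfl⟩ := h
  constructor
  · rintro ⟨r, rfl⟩
    exact ⟨mul s t r, by rw [pe_mul s hPE]⟩
  · rintro ⟨r, rfl⟩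
    obtain ⟨t', ht'⟩ := div1 s hPE hbij x t
    exact ⟨mul s t' r, by rw [← pe_mul s hPE, ht']⟩

/-- local powers. -/
def pwr (a : S) : ℕ → S
  | 0 => a
  | (k + 1) => mul s (pwr a k) a

lemma pwr_right (hPE : IsPE s) (hbij : Function.Bijective s) (a : S) (k : ℕ) :
    ∃ t, mul s a t = pwr s a k := by
  induction k with
  | zero => exact xInxS s hPE hbij a
  | succ m ih =>
    obtain ⟨t, ht⟩ := ih
    exact ⟨mul s t a, by rw [← pe_mul s hPE, ht]; rfl⟩

lemma pwr_left (hPE : IsPE s) (hbij : Function.Bijective s) (a : S) (k : ℕ) :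
    ∃ t, mul s t a = pwr s a k := by
  cases k with
  | zero => exact zInSz s hPE hbij a
  | succ m => exact ⟨pwr s a m, rfl⟩

lemma pwr_ind (a : S) (P : S → Prop) (ha : P a)
    (hstep : ∀ z, P z → P (mul s z a)) (k : ℕ) : P (pwr s a k) := by
  induction k with
  | zero => exact ha
  | succ m ih => exact hstep _ ih

lemma pwr_add (hPE : IsPE s) (a : S) (u v : ℕ) :
    mul s (pwr s a u) (pwr s a v) = pwr s a (u + v + 1) := by
  induction v with
  | zero => rfl
  | succ e ih =>
    show mul s (pwr s a u) (mul s (pwr s a e) a) = pwr s a (u + e + 1 + 1)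
    rw [← pe_mul s hPE, ih]
    rfl

/-- existence of idempotent powers. -/
lemma idempow (hPE : IsPE s) (hbij : Function.Bijective s) (a : S) :
    ∃ k : ℕ, mul s (pwr s a k) (pwr s a k) = pwr s a k := by
  obtain ⟨i0, j0, hne, hij⟩ := Finite.exists_ne_map_eq_of_infinite (pwr s a)
  obtain ⟨i, j, hlt, heq⟩ : ∃ i j, i < j ∧ pwr s a i = pwr s a j := by
    rcases lt_or_gt_of_ne hne with h | h
    · exact ⟨i0, j0, h, hij⟩
    · exact ⟨j0, i0, h, hij.symm⟩
  set d := j - i with hd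
  have hd1 : 1 ≤ d := by omega
  have hperiod : ∀ m, i ≤ m → pwr s a m = pwr s a (m + d) := by
    intro m hm
    induction m with
    | zero =>
      have h0 : i = 0 := by omega
      subst h0
      simpa [hd, show 0 + (j - 0) = j by omega] using heq
    | succ k ih =>
      rcases Nat.lt_or_ge i (k+1) with h2 | h2
      · have hk : i ≤ k := by omega
        have h3 := ih hk
        show pwr s a (k + 1) = pwr s a (k + 1 + d)
        have h4 : k + 1 + d = (k + d) + 1 := by omega
        rw [h4]
        show mul s (pwr s a k) a = mul s (pwr s a (k + d)) a
        rw [h3]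
      · have h0 : i = k + 1 := by omega
        subst h0
        simpa [hd, show k + 1 + (j - (k+1)) = j by omega] using heq
  have hper2 : ∀ c m, i ≤ m → pwr s a m = pwr s a (m + c * d) := by
    intro c
    induction c with
    | zero => intro m _; simp
    | succ e ih =>
      intro m hm
      have h1 := ih m hm
      have h2 := hperiod (m + e * d) (by omega)
      rw [h1, h2]
      congr 1
      ring
  have hK1 : i + 1 ≤ (i + 1) * d := by
    calc i + 1 = (i+1) * 1 := by ring
    _ ≤ (i+1) * d := Nat.mul_le_mul_left _ hd1
  set K := (i + 1) * d with hK
  set M := K - 1 with hM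
  have hMi : i ≤ M := by omega
  have hMM : M + M + 1 = M + K := by omega
  refine ⟨M, ?_⟩
  rw [pwr_add s hPE, hMM, hK, ← hper2 (i+1) M hMi]

/-- F5: an idempotent is a left identity on its right ideal. -/
lemma F5 (hPE : IsPE s) {f w : S} (hff : mul s f f = f) (h : ∃ t, mul s f t = w) :
    mul s f w = w := by
  obtain ⟨t, rfl⟩ := h
  rw [← pe_mul s hPE, hff]

/-- cancellation of left translations on right-ideal classes. -/
lemma Linj (hPE : IsPE s) (hbij : Function.Bijective s) {u a a' : S}
    (h : mul s u a = mul s u a') (ha' : ∃ t, mul s a t = a') : a = a' := by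
  obtain ⟨c, hc⟩ := zInSz s hPE hbij a
  obtain ⟨k, hff⟩ := idempow s hPE hbij c
  set f := pwr s c k with hfdef
  have hfa : mul s f a = a := by
    refine pwr_ind s c (fun z => mul s z a = a) hc ?_ k
    intro z hz
    rw [pe_mul s hPE z c a, hc, hz]
  have hfa' : mul s f a' = a' := by
    obtain ⟨t, rfl⟩ := ha'
    rw [← pe_mul s hPE, hfa]
  obtain ⟨k2, he2⟩ := idempow s hPE hbij (mul s u f)
  set e2 := pwr s (mul s u f) k2 with he2def
  have hvd : ∃ t, mul s (mul s u f) t = e2 := pwr_right s hPE hbij _ k2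
  have hvl : ∃ t, mul s t (mul s u f) = e2 := pwr_left s hPE hbij _ k2
  have hfSe : ∃ t, mul s t e2 = f := by
    have h3 : ∃ t, mul s t (mul s u f) = f :=
      (SXY s hPE hbij u f f).2 (zInSz s hPE hbij f)
    exact (SclassEq s hPE hbij hvl f).2 h3
  have hfe : mul s f e2 = f := by
    obtain ⟨t, ht⟩ := hfSe
    calc mul s f e2 = mul s (mul s t e2) e2 := by rw [ht]
    _ = mul s t (mul s e2 e2) := by rw [pe_mul s hPE]
    _ = f := by rw [he2, ht]
  have hva : mul s (mul s u f) a = mul s (mul s u f) a' := by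
    rw [pe_mul s hPE u f a, pe_mul s hPE u f a', hfa, hfa', h]
  have he2a : mul s e2 a = mul s e2 a' := by
    refine pwr_ind s (mul s u f) (fun z => mul s z a = mul s z a') hva ?_ k2
    intro z _
    rw [pe_mul s hPE z (mul s u f) a, pe_mul s hPE z (mul s u f) a', hva]
  calc a = mul s f a := hfa.symm
  _ = mul s (mul s f e2) a := by rw [hfe]
  _ = mul s f (mul s e2 a) := by rw [pe_mul s hPE]
  _ = mul s f (mul s e2 a') := by rw [he2a]
  _ = mul s (mul s f e2) a' := by rw [pe_mul s hPE]
  _ = a' := by rw [hfe, hfa']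

end Structure

section Endgame

variable {S : Type*} [Finite S] [Nonempty S] (s : S × S → S × S)

lemma claimR (hPE : IsPE s) (hbij : Function.Bijective s) (p q z : S)
    (h : mul s p z = mul s q z) : ∃ mm, mul s p mm = q ∧ mul s mm z = z := by
  -- q ∈ pS
  have hqp : ∃ t, mul s p t = q := by
    obtain ⟨t, ht⟩ := div1 s hPE hbij q z
    exact ⟨mul s z t, by rw [← pe_mul s hPE, h, ht]⟩
  -- idempotent f* in zS ∩ Sq
  obtain ⟨k, hffid⟩ := idempow s hPE hbij (mul s z q)
  set fs := pwr s (mul s z q) k with hfs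
  have hfzS : ∃ t, mul s z t = fs := by
    obtain ⟨t, ht⟩ := pwr_right s hPE hbij (mul s z q) k
    exact ⟨mul s q t, by rw [← pe_mul s hPE, ht]⟩
  -- v and its idempotent power ε
  obtain ⟨k2, heps⟩ := idempow s hPE hbij (mul s p fs)
  set eps := pwr s (mul s p fs) k2 with hepsdef
  have hvEps : ∃ t, mul s (mul s p fs) t = eps := pwr_right s hPE hbij _ k2
  -- q ∈ εS
  have hpv : ∃ t, mul s (mul s p fs) t = p := div1 s hPE hbij p fs
  have hveps : ∃ t, mul s eps t = mul s p fs := by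
    obtain ⟨t, ht⟩ := hvEps
    obtain ⟨t', ht'⟩ := div1 s hPE hbij (mul s p fs) t
    exact ⟨t', by rw [ht] at ht'; exact ht'⟩
  have hqeps : ∃ t, mul s eps t = q := by
    have h1 : ∃ t, mul s (mul s p fs) t = q := by
      obtain ⟨t1, ht1⟩ := hpv
      obtain ⟨t2, ht2⟩ := hqp
      exact ⟨mul s t1 t2, by rw [← pe_mul s hPE, ht1, ht2]⟩
    exact (uSeq s hPE hbij hveps q).1 h1
  have hepsq : mul s eps q = q := F5 s hPE heps hqeps
  -- mm
  obtain ⟨w, hw⟩ := hvEps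
  set mm := mul s fs (mul s w q) with hmm
  have hpmm : mul s p mm = q := by
    rw [hmm, ← pe_mul s hPE p fs (mul s w q), ← pe_mul s hPE (mul s p fs) w q, hw, hepsq]
  refine ⟨mm, hpmm, ?_⟩
  -- mm z = z  via Linj
  have h1 : mul s p (mul s mm z) = mul s p z := by
    rw [← pe_mul s hPE, hpmm, h]
  -- z ∈ (mm z) S
  have hmmzS : ∃ t, mul s mm t = z := by
    -- mm ∈ zS hence mmS = zS ∋ z
    have hmmz : ∃ t, mul s z t = mm := by
      obtain ⟨r, hr⟩ := hfzS
      exact ⟨mul s r (mul s w q), by rw [← pe_mul s hPE, hr, hmm]⟩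
    exact (uSeq s hPE hbij hmmz z).2 (xInxS s hPE hbij z)
  have hz2 : ∃ t, mul s (mul s mm z) t = z := by
    have hmz : ∃ t, mul s mm t = mul s mm z := ⟨z, rfl⟩
    exact (uSeq s hPE hbij hmz z).2 hmmzS
  exact Linj s hPE hbij h1 hz2

lemma claimCap (hPE : IsPE s) (hbij : Function.Bijective s) (x w q y : S)
    (hw : ∃ c, mul s x c = w) (hy : ∃ b, mul s b q = y)
    (he : mul s w q = mul s x y) :
    ∃ a, mul s x a = w ∧ mul s a q = y := by
  obtain ⟨b, hb⟩ := hy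
  have hpq : mul s (mul s x b) q = mul s w q := by
    rw [pe_mul s hPE, hb, he]
  obtain ⟨mm, hmm1, hmm2⟩ := claimR s hPE hbij (mul s x b) w q hpq
  refine ⟨mul s b mm, ?_, ?_⟩
  · rw [← pe_mul s hPE, hmm1]
  · rw [pe_mul s hPE, hmm2, hb]

/-- main collapse: all principal left ideals are equal. -/
lemma classCollapse (hPE : IsPE s) (hbij : Function.Bijective s) (x y z w : S) :
    (∃ t, mul s t (theta s x y) = w) ↔ (∃ t, mul s t z = w) := by
  set u := ihat s hbij z (mul s x y) with hu
  set q := od s hbij z (mul s x y) with hq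
  have h1 : theta s u q = z := Estar s hbij z (mul s x y)
  have h2 : mul s u q = mul s x y := Dstar s hbij z (mul s x y)
  have h3 : ∃ c, mul s x c = u := by
    obtain ⟨t, ht⟩ := ihat_mem s hPE hbij z (mul s x y)
    exact ⟨mul s y t, by rw [← pe_mul s hPE, ht, hu]⟩
  have h4 : ∃ b, mul s b q = y := by
    have hyy : ∃ t, mul s t y = y := zInSz s hPE hbij y
    have h5 : ∃ t, mul s t (mul s x y) = y := (SXY s hPE hbij x y y).2 hyy
    exact (SmulXY s hPE hbij z (mul s x y) y).2 h5
  obtain ⟨a, ha1, ha2⟩ := claimCap s hPE hbij x u q y h3 h4 h2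
  -- now: S·θ_x(y) = S·θ_{xa}(q) = S·θ_u(q) = S·z
  have hR : ∀ w', (∃ t, mul s t (theta s (mul s x a) q) = w')
      ↔ (∃ t, mul s t (theta s x (mul s a q)) = w') := by
    intro w'
    rw [starM s hPE hbij x a q]
    exact SmulXY s hPE hbij (theta s a q) (theta s x (mul s a q)) w'
  have key : (∃ t, mul s t (theta s x y) = w) ↔ (∃ t, mul s t z = w) := by
    rw [← h1, ← ha1, ← ha2]
    exact (hR w).symm
  exact key

/-- [T1]: all right translations are surjective. -/
lemma leftFull (hPE : IsPE s) (hbij : Function.Bijective s) (u y : S) :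
    ∃ t, mul s t y = u := by
  obtain ⟨x0⟩ := (inferInstance : Nonempty S)
  have h1 := classCollapse s hPE hbij x0 x0 y u
  have h2 := classCollapse s hPE hbij x0 x0 u u
  exact h1.1 (h2.2 (zInSz s hPE hbij u))

/-- right translations are injective. -/
lemma Rinj (hPE : IsPE s) (hbij : Function.Bijective s) {t t' y : S}
    (h : mul s t y = mul s t' y) : t = t' := by
  have hsurj : Function.Surjective (fun r => mul s r y) := fun u => leftFull s hPE hbij u y
  have hinj : Function.Injective (fun r => mul s r y) :=
    Finite.injective_iff_surjective.2 hsurj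
  exact hinj h

end Endgame

section LeftGroup

variable {S : Type*} [Finite S] [Nonempty S] (s : S × S → S × S)

lemma exists_e (hPE : IsPE s) (hbij : Function.Bijective s) :
    ∃ e : S, ∀ x, mul s x e = x := by
  obtain ⟨a⟩ := (inferInstance : Nonempty S)
  obtain ⟨e, he⟩ := leftFull s hPE hbij a a
  refine ⟨e, fun x => ?_⟩
  have : mul s (mul s x e) a = mul s x a := by
    rw [pe_mul s hPE, he]
  exact Rinj s hPE hbij this

/-- two-sided inverses for `π x` in `G = eS`. -/
lemma ginvAll (hPE : IsPE s) (hbij : Function.Bijective s) (e : S)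
    (he : ∀ x, mul s x e = x) (x : S) :
    ∃ h, mul s e h = h ∧ mul s h (mul s e x) = e ∧ mul s (mul s e x) h = e := by
  obtain ⟨h0, hh0⟩ := leftFull s hPE hbij e (mul s e x)
  set h := mul s e h0 with hhdef
  have h1 : mul s e h = h := by rw [hhdef, ← pe_mul s hPE, he]
  have h2 : mul s h (mul s e x) = e := by
    rw [hhdef, pe_mul s hPE, hh0, he]
  -- right inverse from left inverses
  obtain ⟨h0', hh0'⟩ := leftFull s hPE hbij e h
  have h3 : mul s (mul s e h0') h = e := by
    rw [pe_mul s hPE, hh0', he]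
  have h4 : mul s (mul s e x) h = e := by
    have k1 : mul s e (mul s (mul s e x) h) = mul s (mul s e x) h := by
      calc mul s e (mul s (mul s e x) h)
          = mul s (mul s e (mul s e x)) h := (pe_mul s hPE e (mul s e x) h).symm
        _ = mul s (mul s (mul s e e) x) h := by rw [pe_mul s hPE e e x]
        _ = mul s (mul s e x) h := by rw [he e]
    calc mul s (mul s e x) h
        = mul s e (mul s (mul s e x) h) := k1.symm
      _ = mul s (mul s (mul s e h0') h) (mul s (mul s e x) h) := by rw [h3]
      _ = mul s (mul s e h0') (mul s h (mul s (mul s e x) h)) := by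
          rw [pe_mul s hPE (mul s e h0') h (mul s (mul s e x) h)]
      _ = mul s (mul s e h0') (mul s (mul s h (mul s e x)) h) := by
          rw [pe_mul s hPE h (mul s e x) h]
      _ = mul s (mul s e h0') (mul s e h) := by rw [h2]
      _ = mul s (mul s e h0') h := by rw [h1]
      _ = e := h3
  exact ⟨h, h1, h2, h4⟩

end LeftGroup

/-- The extension solution on `X × A × G` associated to a matched pair of groups
`(A, G, σ, δ)` and a family of permutations `φ_a` of `X`:
`s'((α,a,x),(β,b,y)) = ((α, a, xy), (φ⁻¹_{b(δ_x(a))⁻¹}(φ_b(β)), b(δ_x(a))⁻¹, σ_{δ_x(a)}(y)))`. -/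
def extSol {A G : Type*} [Group A] [Group G] {X : Type*}
    (σ : A → G ≃ G) (δ : G → A ≃ A) (φ : A → X ≃ X) :
    (X × A × G) × (X × A × G) → (X × A × G) × (X × A × G) :=
  fun p =>
    ((p.1.1, p.1.2.1, p.1.2.2 * p.2.2.2),
     ((φ (p.2.2.1 * (δ p.1.2.2 p.1.2.1)⁻¹)).symm (φ p.2.2.1 p.2.1),
      p.2.2.1 * (δ p.1.2.2 p.1.2.1)⁻¹,
      σ (δ p.1.2.2 p.1.2.1) p.2.2.2))


section Main0

/-- The main construction, for a type in `Type 0`. -/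
theorem main0 {S : Type} [Finite S] [Nonempty S] (s : S × S → S × S)
    (hPE : IsPE s) (hbij : Function.Bijective s) :
    ∃ (A : Type) (G : Type) (gA : Group A) (gG : Group G)
      (_ : Finite A) (_ : Finite G),
      letI := gA
      letI := gG
      ∃ (σ : A → G ≃ G) (δ : G → A ≃ A),
        (∀ (a b : A) (x : G), σ (a * b) x = σ a (σ b x)) ∧
        (∀ (x y : G) (a : A), δ (x * y) a = δ y (δ x a)) ∧
        (∀ (a : A) (x y : G), σ a (x * y) = σ a x * σ (δ x a) y) ∧
        (∀ (x : G) (a b : A), δ x (a * b) = δ (σ b x) a * δ x b) ∧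
        ∃ (X : Type) (_ : Nonempty X) (_ : Finite X) (φ : A → X ≃ X)
          (F : S ≃ X × A × G),
          ∀ p : S × S, extSol σ δ φ (F p.1, F p.2) = (F (s p).1, F (s p).2) := by
  classical
  obtain ⟨e, he⟩ := exists_e s hPE hbij
  choose jf hj1 hj2 hj3 using ginvAll s hPE hbij e he
  -- basic coordinate machinery
  have hee : mul s e e = e := he e
  have pi_idem : ∀ x, mul s e (mul s e x) = mul s e x := by
    intro x; rw [← pe_mul s hPE, hee]
  have pi_hom : ∀ x y, mul s e (mul s x y) = mul s (mul s e x) (mul s e y) := by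
    intro x y
    calc mul s e (mul s x y) = mul s (mul s e x) y := (pe_mul s hPE e x y).symm
    _ = mul s (mul s (mul s e x) e) y := by rw [he]
    _ = mul s (mul s e x) (mul s e y) := by rw [pe_mul s hPE]
  have VM : ∀ mm, mul s e mm = e → ∀ v, mul s v mm = v := by
    intro mm hmm v
    calc mul s v mm = mul s (mul s v e) mm := by rw [he]
    _ = mul s v (mul s e mm) := by rw [pe_mul s hPE]
    _ = v := by rw [hmm, he]
  set iv : S → S := fun x => mul s x (jf x) with hivdef
  have iv_decomp : ∀ x, mul s (iv x) (mul s e x) = x := by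
    intro x
    rw [hivdef]
    show mul s (mul s x (jf x)) (mul s e x) = x
    rw [pe_mul s hPE, hj2, he]
  have iv_E : ∀ x, mul s e (iv x) = e := by
    intro x
    show mul s e (mul s x (jf x)) = e
    rw [← pe_mul s hPE]
    exact hj3 x
  have decompU : ∀ ι g ι' g', mul s e ι = e → mul s e ι' = e →
      mul s e g = g → mul s e g' = g' → mul s ι g = mul s ι' g' →
      ι = ι' ∧ g = g' := by
    intro ι g ι' g' hι hι' hg hg' heq
    have hgq : g = g' := by
      calc g = mul s e g := hg.symm
      _ = mul s (mul s e ι) g := by rw [hι]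
      _ = mul s e (mul s ι g) := by rw [pe_mul s hPE]
      _ = mul s e (mul s ι' g') := by rw [heq]
      _ = mul s (mul s e ι') g' := by rw [← pe_mul s hPE]
      _ = g' := by rw [hι', hg']
    subst hgq
    exact ⟨Rinj s hPE hbij heq, rfl⟩
  have idemE : ∀ w, mul s w w = w → mul s e w = e := by
    intro w hw
    have h1 : mul s (mul s (mul s e w) (mul s e w)) (jf w) = mul s (mul s e w) (jf w) := by
      rw [← pi_hom, hw]
    have h2 : mul s (mul s e w) (jf w) = e := hj3 w
    calc mul s e w = mul s (mul s e w) e := by rw [he]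
    _ = mul s (mul s e w) (mul s (mul s e w) (jf w)) := by rw [h2]
    _ = mul s (mul s (mul s e w) (mul s e w)) (jf w) := by
        rw [pe_mul s hPE (mul s e w) (mul s e w) (jf w)]
    _ = e := by rw [h1, h2]
  have uIota : ∀ u ι, mul s e ι = e → mul s u ι = u := fun u ι h => VM ι h u
  have iotaIdem : ∀ ι, mul s e ι = e → mul s ι ι = ι := fun ι h => VM ι h ι
  have thE : ∀ u ι, mul s e ι = e → mul s e (theta s u ι) = e := by
    intro u ι hι
    apply idemE
    have hB := pe_B s hPE u ι ι
    rw [uIota u ι hι, iotaIdem ι hι] at hB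
    exact hB
  -- pi / iv of products
  have piMul : ∀ u v, mul s e (mul s u v) = mul s (mul s e u) (mul s e v) := pi_hom
  have ivMul : ∀ u v, iv (mul s u v) = iv u := by
    intro u v
    have hd1 : mul s (iv (mul s u v)) (mul s e (mul s u v)) = mul s u v :=
      iv_decomp (mul s u v)
    have hd2 : mul s (iv u) (mul s e (mul s u v)) = mul s u v := by
      rw [piMul, ← pe_mul s hPE, iv_decomp]
      calc mul s u (mul s e v) = mul s (mul s u e) v := by rw [← pe_mul s hPE]
      _ = mul s u v := by rw [he]
    have := decompU (iv (mul s u v)) (mul s e (mul s u v)) (iv u) (mul s e (mul s u v))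
      (iv_E _) (iv_E _) (pi_idem _) (pi_idem _) (hd1.trans hd2.symm)
    exact this.1
  have coordEq : ∀ x y, iv x = iv y → mul s e x = mul s e y → x = y := by
    intro x y h1 h2
    rw [← iv_decomp x, ← iv_decomp y, h1, h2]
  -- [T2] : injectivity of all θ-maps
  have tInj : ∀ u : S, Function.Injective (theta s u) := by
    intro u t t' h
    by_contra hne
    have KER : ∀ w, theta s w t = theta s w t' := by
      intro w
      obtain ⟨c, hc⟩ := (dict1 s hbij w u).1 (leftFull s hPE hbij u w)
      rw [← hc, ← comp_rule s hPE hbij u c t, ← comp_rule s hPE hbij u c t', h]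
    have hneq : ∀ w, mul s w t ≠ mul s w t' := by
      intro w hw
      apply hne
      have h2 : s (w, t) = s (w, t') := by
        rw [s_eq s w t, s_eq s w t', hw, KER w]
      have h3 := hbij.1 h2
      exact congrArg Prod.snd h3
    set g0 := mul s (jf t) (mul s e t') with hg0
    have hg0G : mul s e g0 = g0 := by
      rw [hg0, ← pe_mul s hPE, hj1]
    have hrule : ∀ w, mul s w t' = mul s (mul s w t) g0 := by
      intro w
      have e1 : iv (mul s w t') = iv w := ivMul w t'
      have e2 : iv (mul s (mul s w t) g0) = iv w := by rw [ivMul, ivMul]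
      have p1 : mul s e (mul s w t') = mul s (mul s e w) (mul s e t') := pi_hom w t'
      have p2 : mul s e (mul s (mul s w t) g0) = mul s (mul s e w) (mul s e t') := by
        rw [pi_hom (mul s w t) g0, pi_hom w t, hg0G]
        calc mul s (mul s (mul s e w) (mul s e t)) g0
            = mul s (mul s e w) (mul s (mul s e t) g0) := pe_mul s hPE _ _ _
          _ = mul s (mul s e w) (mul s (mul s e t) (mul s (jf t) (mul s e t'))) := by
              rw [← hg0]
          _ = mul s (mul s e w) (mul s (mul s (mul s e t) (jf t)) (mul s e t')) := by
              rw [pe_mul s hPE (mul s e t) (jf t) (mul s e t')]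
          _ = mul s (mul s e w) (mul s e (mul s e t')) := by rw [hj3 t]
          _ = mul s (mul s e w) (mul s e t') := by rw [pi_idem]
      exact coordEq _ _ (e1.trans e2.symm) (p1.trans p2.symm)
    obtain ⟨w1, hw1⟩ := leftFull s hPE hbij e t
    have hbg : mul s w1 t' = g0 := by rw [hrule w1, hw1, hg0G]
    have hne2 : e ≠ g0 := fun hh => hneq w1 (by rw [hw1, hbg, hh])
    have coll : ∀ a, theta s a e = theta s a g0 := by
      intro a
      calc theta s a e = theta s a (mul s w1 t) := by rw [hw1]
      _ = mul s (theta s a w1) (theta s (mul s a w1) t) := (pe_B s hPE a w1 t).symm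
      _ = mul s (theta s a w1) (theta s (mul s a w1) t') := by rw [KER]
      _ = theta s a (mul s w1 t') := pe_B s hPE a w1 t'
      _ = theta s a g0 := by rw [hbg]
    obtain ⟨c, hcfix⟩ := fixTheta s hPE hbij g0
    have hce : theta s c e = g0 := by rw [coll c, hcfix]
    have hg0idem : mul s g0 g0 = g0 := by
      have hBid := pe_B s hPE c e e
      rw [he c, hee, hce] at hBid
      exact hBid
    exact hne2 ((hg0G.symm.trans (idemE g0 hg0idem)).symm)
  have tBij : ∀ u, Function.Bijective (theta s u) :=
    fun u => Finite.injective_iff_bijective.1 (tInj u)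
  -- E-preservation and the K5 rules
  have K5 : ∀ u ι z, mul s e ι = e →
      theta s (theta s u ι) (theta s u z) = theta s ι z := by
    intro u ι z hι
    have hC := pe_C s hPE u ι z
    rwa [uIota u ι hι] at hC
  have kappaX : ∀ ι, mul s e ι = e → ∀ w, theta s (theta s ι ι) w = w := by
    intro ι hι w
    obtain ⟨z, hz⟩ := (tBij ι).2 w
    have hC := pe_C s hPE ι ι z
    rw [iotaIdem ι hι] at hC
    rw [← hz]
    exact hC
  have thDecomp : ∀ u v,
      theta s u v = mul s (theta s u (iv v)) (theta s u (mul s e v)) := by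
    intro u v
    have hB := pe_B s hPE u (iv v) (mul s e v)
    rw [iv_decomp v, uIota u (iv v) (iv_E v)] at hB
    exact hB.symm
  have piTheta : ∀ u v, mul s e (theta s u v) = mul s e (theta s u (mul s e v)) := by
    intro u v
    rw [thDecomp u v, pi_hom, thE u (iv v) (iv_E v)]
    exact pi_idem _
  have ivTheta : ∀ u v, iv (theta s u v) = theta s u (iv v) := by
    intro u v
    have hd2 : mul s (mul s (theta s u (iv v)) (iv (theta s u (mul s e v))))
        (mul s e (theta s u (mul s e v))) = theta s u v := by
      rw [pe_mul s hPE, iv_decomp (theta s u (mul s e v))]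
      exact (thDecomp u v).symm
    have hd1 : mul s (iv (theta s u v)) (mul s e (theta s u v)) = theta s u v :=
      iv_decomp _
    have hE1 : mul s e (mul s (theta s u (iv v)) (iv (theta s u (mul s e v)))) = e := by
      rw [pi_hom, thE u (iv v) (iv_E v), iv_E]
      exact hee
    have hcalc := (decompU (iv (theta s u v)) (mul s e (theta s u v))
        (mul s (theta s u (iv v)) (iv (theta s u (mul s e v))))
        (mul s e (theta s u (mul s e v)))
        (iv_E _) hE1 (pi_idem _) (pi_idem _) (hd1.trans hd2.symm)).1
    rw [hcalc]
    exact VM (iv (theta s u (mul s e v))) (iv_E _) (theta s u (iv v))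
  have ivE_id : ∀ ι, mul s e ι = e → iv ι = ι := by
    intro ι hι
    have hjfι : jf ι = e := by
      have h1 := hj2 ι
      rw [hι, he] at h1
      exact h1
    show mul s ι (jf ι) = ι
    rw [hjfι, he]
  have hivg : ∀ h : S, mul s e h = h → iv h = e := by
    intro h hh
    show mul s h (jf h) = e
    have := hj3 h; rwa [hh] at this
  -- the group G = eS
  letI instMulG : Mul {g : S // mul s e g = g} :=
    ⟨fun g h => ⟨mul s g.1 h.1, by rw [← pe_mul s hPE, g.2]⟩⟩
  letI instOneG : One {g : S // mul s e g = g} := ⟨⟨e, hee⟩⟩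
  letI instInvG : Inv {g : S // mul s e g = g} := ⟨fun g => ⟨jf g.1, hj1 g.1⟩⟩
  letI gG : Group {g : S // mul s e g = g} :=
    Group.ofLeftAxioms
      (fun a b c => Subtype.ext (pe_mul s hPE a.1 b.1 c.1))
      (fun a => Subtype.ext a.2)
      (fun a => Subtype.ext (by
        show mul s (jf a.1) a.1 = e
        have := hj2 a.1
        rwa [a.2] at this))
  have g_inv_mul : ∀ g : {g : S // mul s e g = g}, mul s g.1 (jf g.1) = e := by
    intro g
    have := hj3 g.1; rwa [g.2] at this
  -- identity θ-map exists
  have theta_id : ∀ u : S, ∃ p, od s hbij p p = p ∧ (∃ t, od s hbij u t = p)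
      ∧ (∃ t, od s hbij t u = p) := by
    intro u
    obtain ⟨k, hk⟩ := idempow (dual s hbij) (dual_isPE s hbij hPE) (dual_bij s hbij) u
    refine ⟨pwr (dual s hbij) u k, hk, ?_, ?_⟩
    · obtain ⟨t, ht⟩ := pwr_right (dual s hbij) (dual_isPE s hbij hPE) (dual_bij s hbij) u k
      exact ⟨t, ht⟩
    · obtain ⟨t, ht⟩ := pwr_left (dual s hbij) (dual_isPE s hbij hPE) (dual_bij s hbij) u k
      exact ⟨t, ht⟩
  have theta_p_id : ∀ p : S, od s hbij p p = p → ∀ z, theta s p z = z := by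
    intro p hp z
    apply tInj p
    rw [comp_rule s hPE hbij p p z, hp]
  -- the group A ≤ Perm S
  letI := Fintype.ofFinite S
  letI := Classical.decEq S
  let Acar : Subgroup (Equiv.Perm S) :=
    { carrier := {c | ∃ u, ∀ z, c z = theta s u z}
      one_mem' := by
        obtain ⟨x0⟩ := (inferInstance : Nonempty S)
        obtain ⟨p, hp, -, -⟩ := theta_id x0
        exact ⟨p, fun z => (theta_p_id p hp z).symm⟩
      mul_mem' := by
        rintro c d ⟨u, hu⟩ ⟨v, hv⟩
        refine ⟨od s hbij u v, fun z => ?_⟩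
        rw [Equiv.Perm.mul_apply, hv, hu]
        exact comp_rule s hPE hbij v u z
      inv_mem' := by
        rintro c ⟨u, hu⟩
        obtain ⟨p, hp, ⟨t, ht⟩, -⟩ := theta_id u
        refine ⟨t, fun z => ?_⟩
        rw [Equiv.Perm.inv_def, Equiv.symm_apply_eq, hu]
        rw [comp_rule s hPE hbij t u z, ht, theta_p_id p hp] }
  let thPerm : S → Equiv.Perm S := fun u => Equiv.ofBijective (theta s u) (tBij u)
  let Aelt : S → ↥Acar := fun u => ⟨thPerm u, ⟨u, fun _ => rfl⟩⟩
  have Arepr : ∀ c : ↥Acar, ∃ u, c = Aelt u := by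
    rintro ⟨c, u, hu⟩
    exact ⟨u, Subtype.ext (Equiv.ext fun z => hu z)⟩
  have Aelt_apply : ∀ u z, ((Aelt u : ↥Acar) : Equiv.Perm S) z = theta s u z :=
    fun u z => rfl
  have AmulElt : ∀ u v, Aelt u * Aelt v = Aelt (od s hbij u v) := by
    intro u v
    apply Subtype.ext; apply Equiv.ext; intro z
    show theta s u (theta s v z) = theta s (od s hbij u v) z
    exact comp_rule s hPE hbij v u z
  have AmE : ∀ u g, Aelt (mul s u g) = (Aelt (theta s u g))⁻¹ * Aelt g := by
    intro u g
    have h1 : Aelt (theta s u g) * Aelt (mul s u g) = Aelt g := by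
      apply Subtype.ext; apply Equiv.ext; intro z
      show theta s (theta s u g) (theta s (mul s u g) z) = theta s g z
      exact pe_C s hPE u g z
    rw [← h1, inv_mul_cancel_left]
  have hK5A : ∀ u ι, mul s e ι = e → Aelt (theta s u ι) = Aelt ι * (Aelt u)⁻¹ := by
    intro u ι hι
    have h1 : Aelt (theta s u ι) * Aelt u = Aelt ι := by
      apply Subtype.ext; apply Equiv.ext; intro z
      show theta s (theta s u ι) (theta s u z) = theta s ι z
      exact K5 u ι z hι
    rw [← h1, mul_inv_cancel_right]
  -- δ
  let dfun : {g : S // mul s e g = g} → ↥Acar → ↥Acar :=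
    fun g c => (Aelt ((c : Equiv.Perm S) g.1))⁻¹ * Aelt g.1
  have dlem : ∀ (g : {g : S // mul s e g = g}) (u : S),
      dfun g (Aelt u) = Aelt (mul s u g.1) := by
    intro g u
    show (Aelt (theta s u g.1))⁻¹ * Aelt g.1 = Aelt (mul s u g.1)
    exact (AmE u g.1).symm
  have dcancel1 : ∀ (g : {g : S // mul s e g = g}) (c : ↥Acar),
      dfun g (dfun g⁻¹ c) = c := by
    intro g c
    obtain ⟨u, rfl⟩ := Arepr c
    rw [dlem, dlem]
    congr 1
    show mul s (mul s u (jf g.1)) g.1 = u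
    rw [pe_mul s hPE]
    have h2 : mul s (jf g.1) g.1 = e := by
      have := hj2 g.1; rwa [g.2] at this
    rw [h2, he]
  have dcancel2 : ∀ (g : {g : S // mul s e g = g}) (c : ↥Acar),
      dfun g⁻¹ (dfun g c) = c := by
    intro g c
    obtain ⟨u, rfl⟩ := Arepr c
    rw [dlem, dlem]
    congr 1
    show mul s (mul s u g.1) (jf g.1) = u
    rw [pe_mul s hPE, g_inv_mul g, he]
  let dmap : {g : S // mul s e g = g} → ↥Acar ≃ ↥Acar := fun g =>
    { toFun := dfun g
      invFun := dfun g⁻¹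
      left_inv := fun c => dcancel2 g c
      right_inv := fun c => dcancel1 g c }
  -- σ
  let smap0 : ↥Acar → {g : S // mul s e g = g} → {g : S // mul s e g = g} :=
    fun c g => ⟨mul s e ((c : Equiv.Perm S) g.1), pi_idem _⟩
  have smap0_inj : ∀ c : ↥Acar, Function.Injective (smap0 c) := by
    intro c g g' hgg
    obtain ⟨u, rfl⟩ := Arepr c
    have hv : mul s e (theta s u g.1) = mul s e (theta s u g'.1) :=
      congrArg Subtype.val hgg
    have hiv : iv (theta s u g.1) = iv (theta s u g'.1) := by
      rw [ivTheta, ivTheta, hivg g.1 g.2, hivg g'.1 g'.2]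
    exact Subtype.ext (tInj u (coordEq _ _ hiv hv))
  let smap : ↥Acar → {g : S // mul s e g = g} ≃ {g : S // mul s e g = g} :=
    fun c => Equiv.ofBijective (smap0 c) (Finite.injective_iff_bijective.1 (smap0_inj c))
  have smap_apply : ∀ (c : ↥Acar) (g : {g : S // mul s e g = g}),
      (smap c g).1 = mul s e ((c : Equiv.Perm S) g.1) := fun c g => rfl
  -- the set X
  have hXfact : ∀ u : S, mul s e (theta s (iv u) (iv u)) = e ∧
      ∀ z, theta s (theta s (iv u) (iv u)) z = z :=
    fun u => ⟨thE (iv u) (iv u) (iv_E u), kappaX (iv u) (iv_E u)⟩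
  -- the bijection F
  let Fma : S → {ι : S // mul s e ι = e ∧ ∀ z, theta s ι z = z} × ↥Acar ×
      {g : S // mul s e g = g} := fun u =>
    (⟨theta s (iv u) (iv u), hXfact u⟩, Aelt (iv u), ⟨mul s e u, pi_idem u⟩)
  let Fmb : {ι : S // mul s e ι = e ∧ ∀ z, theta s ι z = z} × ↥Acar ×
      {g : S // mul s e g = g} → S :=
    fun t => mul s (((t.2.1⁻¹ : ↥Acar) : Equiv.Perm S) t.1.1) t.2.2.1
  have hFleft : ∀ u, Fmb (Fma u) = u := by
    intro u
    show mul s ((((Aelt (iv u))⁻¹ : ↥Acar) : Equiv.Perm S) (theta s (iv u) (iv u)))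
        (mul s e u) = u
    have h1 : (((Aelt (iv u))⁻¹ : ↥Acar) : Equiv.Perm S) (theta s (iv u) (iv u)) = iv u := by
      have h2 : (((Aelt (iv u))⁻¹ : ↥Acar) : Equiv.Perm S) = (thPerm (iv u))⁻¹ := rfl
      rw [h2]
      have h3 : theta s (iv u) (iv u) = thPerm (iv u) (iv u) := rfl
      rw [h3, Equiv.Perm.inv_def, Equiv.symm_apply_apply]
    rw [h1, iv_decomp]
  have AmE' : ∀ u g, Aelt (theta s u g) * Aelt (mul s u g) = Aelt g := by
    intro u g
    apply Subtype.ext; apply Equiv.ext; intro z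
    show theta s (theta s u g) (theta s (mul s u g) z) = theta s g z
    exact pe_C s hPE u g z
  have hAX : ∀ χ : S, (∀ z, theta s χ z = z) → Aelt χ = 1 := by
    intro χ hχ
    apply Subtype.ext; apply Equiv.ext; intro z
    show theta s χ z = z
    exact hχ z
  have hFright : ∀ t, Fma (Fmb t) = t := by
    rintro ⟨χ, c, g⟩
    obtain ⟨v, rfl⟩ := Arepr c
    obtain ⟨v', hv'⟩ := Arepr (Aelt v)⁻¹
    have hval : Fmb (χ, Aelt v, g) = mul s (theta s v' χ.1) g.1 := by
      show mul s ((((Aelt v)⁻¹ : ↥Acar) : Equiv.Perm S) χ.1) g.1 = _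
      rw [hv']
      rfl
    have hEχ := χ.2.1
    have hEι' : mul s e (theta s v' χ.1) = e := thE v' χ.1 hEχ
    have hivu : iv (mul s (theta s v' χ.1) g.1) = theta s v' χ.1 := by
      rw [ivMul, ivE_id _ hEι']
    have hAι' : Aelt (theta s v' χ.1) = Aelt v := by
      rw [hK5A v' χ.1 hEχ, hAX χ.1 χ.2.2, one_mul, ← hv', inv_inv]
    rw [hval]
    show (_, _, _) = (χ, Aelt v, g)
    refine Prod.ext ?_ (Prod.ext ?_ ?_)
    · apply Subtype.ext
      show theta s (iv (mul s (theta s v' χ.1) g.1)) (iv (mul s (theta s v' χ.1) g.1)) = χ.1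
      rw [hivu]
      have hk := K5 v' χ.1 χ.1 hEχ
      rw [χ.2.2 χ.1] at hk
      exact hk
    · show Aelt (iv (mul s (theta s v' χ.1) g.1)) = Aelt v
      rw [hivu, hAι']
    · apply Subtype.ext
      show mul s e (mul s (theta s v' χ.1) g.1) = g.1
      rw [pi_hom, hEι', g.2]
      exact g.2
  -- axioms
  have hax1 : ∀ (a b : ↥Acar) (x : {g : S // mul s e g = g}),
      smap (a * b) x = smap a (smap b x) := by
    intro a b x
    obtain ⟨u, rfl⟩ := Arepr a
    obtain ⟨v, rfl⟩ := Arepr b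
    apply Subtype.ext
    show mul s e (((Aelt u * Aelt v : ↥Acar) : Equiv.Perm S) x.1)
        = mul s e (theta s u (mul s e (theta s v x.1)))
    have h1 : ((Aelt u * Aelt v : ↥Acar) : Equiv.Perm S) x.1
        = theta s u (theta s v x.1) := rfl
    rw [h1]
    exact piTheta u (theta s v x.1)
  have hax2 : ∀ (x y : {g : S // mul s e g = g}) (a : ↥Acar),
      dmap (x * y) a = dmap y (dmap x a) := by
    intro x y a
    obtain ⟨u, rfl⟩ := Arepr a
    show dfun (x * y) (Aelt u) = dfun y (dfun x (Aelt u))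
    rw [dlem x u]
    rw [dlem (x*y) u, dlem y (mul s u x.1)]
    congr 1
    show mul s u (mul s x.1 y.1) = mul s (mul s u x.1) y.1
    rw [pe_mul s hPE]
  have hax3 : ∀ (a : ↥Acar) (x y : {g : S // mul s e g = g}),
      smap a (x * y) = smap a x * smap (dmap x a) y := by
    intro a x y
    obtain ⟨u, rfl⟩ := Arepr a
    apply Subtype.ext
    show mul s e (theta s u (mul s x.1 y.1))
        = mul s (mul s e (theta s u x.1)) ((smap (dfun x (Aelt u)) y).1)
    rw [dlem x u]
    have h2 : (smap (Aelt (mul s u x.1)) y).1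
        = mul s e (theta s (mul s u x.1) y.1) := rfl
    rw [h2, ← pe_B s hPE u x.1 y.1]
    exact pi_hom _ _
  have hax4 : ∀ (x : {g : S // mul s e g = g}) (a b : ↥Acar),
      dmap x (a * b) = dmap (smap b x) a * dmap x b := by
    intro x a b
    obtain ⟨u, rfl⟩ := Arepr a
    obtain ⟨v, rfl⟩ := Arepr b
    show dfun x (Aelt u * Aelt v) = dfun (smap (Aelt v) x) (Aelt u) * dfun x (Aelt v)
    rw [AmulElt u v, dlem x (od s hbij u v), dlem (smap (Aelt v) x) u, dlem x v]
    have hsv1 : (smap (Aelt v) x).1 = mul s e (theta s v x.1) := rfl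
    rw [hsv1]
    set tvx := theta s v x.1 with htvx
    have l1 := AmE (od s hbij u v) x.1
    have l2 := AmE u (mul s e tvx)
    have l3 := AmE v x.1
    have l5 := AmE' u tvx
    have l6 := AmE' u (mul s e tvx)
    have e3 : mul s u (mul s e tvx) = mul s u tvx := by
      rw [← pe_mul s hPE, he]
    rw [e3] at l6
    have h1 : theta s (od s hbij u v) x.1 = theta s u tvx :=
      (comp_rule s hPE hbij v u x.1).symm
    rw [l1, h1, l2, l3]
    have l5' : Aelt (theta s u tvx) = Aelt tvx * (Aelt (mul s u tvx))⁻¹ :=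
      eq_mul_inv_of_mul_eq l5
    have l6' : Aelt (theta s u (mul s e tvx))
        = Aelt (mul s e tvx) * (Aelt (mul s u tvx))⁻¹ :=
      eq_mul_inv_of_mul_eq l6
    rw [l5', l6']
    group
    rfl
  -- the equivalence F
  let Fequiv : S ≃ {ι : S // mul s e ι = e ∧ ∀ z, theta s ι z = z} × ↥Acar ×
      {g : S // mul s e g = g} := ⟨Fma, Fmb, hFleft, hFright⟩
  have hXne : Nonempty {ι : S // mul s e ι = e ∧ ∀ z, theta s ι z = z} :=
    ⟨⟨theta s e e, thE e e hee, kappaX e hee⟩⟩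
  -- the final equation
  have hdelta : ∀ u : S,
      dmap ⟨mul s e u, pi_idem u⟩ (Aelt (iv u)) = Aelt u := by
    intro u
    show dfun ⟨mul s e u, pi_idem u⟩ (Aelt (iv u)) = Aelt u
    rw [dlem]
    congr 1
    exact iv_decomp u
  have hfinal : ∀ p : S × S,
      extSol smap dmap (fun _ => Equiv.refl _) (Fequiv p.1, Fequiv p.2)
        = (Fequiv (s p).1, Fequiv (s p).2) := by
    rintro ⟨u, v⟩
    show extSol smap dmap (fun _ => Equiv.refl _) (Fma u, Fma v)
        = (Fma (mul s u v), Fma (theta s u v))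
    rw [extSol]
    refine Prod.ext (Prod.ext ?_ (Prod.ext ?_ ?_)) (Prod.ext ?_ (Prod.ext ?_ ?_))
    · -- X-component of first output
      apply Subtype.ext
      show theta s (iv u) (iv u) = theta s (iv (mul s u v)) (iv (mul s u v))
      rw [ivMul u v]
    · show Aelt (iv u) = Aelt (iv (mul s u v))
      rw [ivMul u v]
    · apply Subtype.ext
      show mul s (mul s e u) (mul s e v) = mul s e (mul s u v)
      exact (pi_hom u v).symm
    · -- X-component of second output (φ trivial)
      show (Equiv.refl _).symm ((Equiv.refl _) (Fma v).1) = (Fma (theta s u v)).1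
      simp only [Equiv.refl_symm, Equiv.refl_apply]
      apply Subtype.ext
      show theta s (iv v) (iv v) = theta s (iv (theta s u v)) (iv (theta s u v))
      rw [ivTheta u v]
      exact (by
        have hk := K5 u (iv v) (iv v) (iv_E v)
        exact hk.symm)
    · -- A-component of second output
      show Aelt (iv v) * (dmap ⟨mul s e u, pi_idem u⟩ (Aelt (iv u)))⁻¹
          = Aelt (iv (theta s u v))
      rw [hdelta u, ivTheta u v, hK5A u (iv v) (iv_E v)]
    · -- G-component of second output
      show smap (dmap ⟨mul s e u, pi_idem u⟩ (Aelt (iv u))) ⟨mul s e v, pi_idem v⟩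
          = (⟨mul s e (theta s u v), pi_idem _⟩ : {g : S // mul s e g = g})
      rw [hdelta u]
      apply Subtype.ext
      show mul s e (theta s u (mul s e v)) = mul s e (theta s u v)
      exact (piTheta u v).symm
  exact ⟨↥Acar, {g : S // mul s e g = g}, inferInstance, gG, inferInstance, inferInstance,
    smap, dmap, hax1, hax2, hax3, hax4,
    ⟨{ι : S // mul s e ι = e ∧ ∀ z, theta s ι z = z}, hXne, inferInstance,
     fun _ => Equiv.refl _, Fequiv, hfinal⟩⟩

end Main0

/-- main classification theorem: every finite bijective set-theoretic
solution to the Pentagon Equation is isomorphic to an extension `extSol σ δ φ` on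
`X × A × G` of the solution associated to a matched pair of finite groups
`(A, G, σ, δ)`, for some nonempty finite set `X` and permutations `φ_a` of `X`. -/
theorem statement19 {S : Type*} [Finite S] [Nonempty S] (s : S × S → S × S)
    (hPE : IsPE s) (hbij : Function.Bijective s) :
    ∃ (A : Type) (G : Type) (gA : Group A) (gG : Group G)
      (_ : Finite A) (_ : Finite G),
      letI := gA
      letI := gG
      ∃ (σ : A → G ≃ G) (δ : G → A ≃ A),
        (∀ (a b : A) (x : G), σ (a * b) x = σ a (σ b x)) ∧
        (∀ (x y : G) (a : A), δ (x * y) a = δ y (δ x a)) ∧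
        (∀ (a : A) (x y : G), σ a (x * y) = σ a x * σ (δ x a) y) ∧
        (∀ (x : G) (a b : A), δ x (a * b) = δ (σ b x) a * δ x b) ∧
        ∃ (X : Type) (_ : Nonempty X) (_ : Finite X) (φ : A → X ≃ X)
          (F : S ≃ X × A × G),
          ∀ p : S × S, extSol σ δ φ (F p.1, F p.2) = (F (s p).1, F (s p).2) := by
  classical
  obtain ⟨e0⟩ : Nonempty (S ≃ Fin (Nat.card S)) := ⟨Finite.equivFin S⟩
  have hne : Nonempty (Fin (Nat.card S)) := e0.symm.nonempty.elim (fun _ => ⟨e0 (Classical.arbitrary S)⟩)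
  let s' : Fin (Nat.card S) × Fin (Nat.card S) → Fin (Nat.card S) × Fin (Nat.card S) :=
    fun p => (e0 ((s (e0.symm p.1, e0.symm p.2)).1), e0 ((s (e0.symm p.1, e0.symm p.2)).2))
  have hs' : ∀ x y : S, s' (e0 x, e0 y) = (e0 (s (x, y)).1, e0 (s (x, y)).2) := by
    intro x y
    simp only [s', Equiv.symm_apply_apply]
  have hbij' : Function.Bijective s' := by
    have h1 : s' = (fun q : S × S => (e0 q.1, e0 q.2)) ∘ s ∘
        (fun p : Fin (Nat.card S) × Fin (Nat.card S) => (e0.symm p.1, e0.symm p.2)) := by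
      funext p
      rfl
    rw [h1]
    exact ((Equiv.prodCongr e0 e0).bijective.comp hbij).comp
      (Equiv.prodCongr e0.symm e0.symm).bijective
  have h12 : ∀ p, s12 s' ((e0 p.1 : Fin (Nat.card S)), e0 p.2.1, e0 p.2.2)
      = (e0 (s12 s p).1, e0 (s12 s p).2.1, e0 (s12 s p).2.2) := by
    intro p
    simp only [s12, s', Equiv.symm_apply_apply]
  have h13 : ∀ p, s13 s' ((e0 p.1 : Fin (Nat.card S)), e0 p.2.1, e0 p.2.2)
      = (e0 (s13 s p).1, e0 (s13 s p).2.1, e0 (s13 s p).2.2) := by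
    intro p
    simp only [s13, s', Equiv.symm_apply_apply]
  have h23 : ∀ p, s23 s' ((e0 p.1 : Fin (Nat.card S)), e0 p.2.1, e0 p.2.2)
      = (e0 (s23 s p).1, e0 (s23 s p).2.1, e0 (s23 s p).2.2) := by
    intro p
    simp only [s23, s', Equiv.symm_apply_apply]
  have hPE' : IsPE s' := by
    funext q
    have hq : q = ((e0 (e0.symm q.1) : Fin (Nat.card S)), e0 (e0.symm q.2.1),
        e0 (e0.symm q.2.2)) := by
      simp only [Equiv.apply_symm_apply]
    set p : S × S × S := (e0.symm q.1, e0.symm q.2.1, e0.symm q.2.2) with hp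
    show s23 s' (s13 s' (s12 s' q)) = s12 s' (s23 s' q)
    rw [hq]
    show s23 s' (s13 s' (s12 s' (e0 p.1, e0 p.2.1, e0 p.2.2)))
        = s12 s' (s23 s' (e0 p.1, e0 p.2.1, e0 p.2.2))
    rw [h12, h13, h23, h23, h12, pe_point s hPE p.1 p.2.1 p.2.2]
  obtain ⟨A, G, gA, gG, fA, fG, σ, δ, h1, h2, h3, h4, X, hX1, hX2, φ, F0, hF0⟩ :=
    main0 s' hPE' hbij'
  refine ⟨A, G, gA, gG, fA, fG, σ, δ, h1, h2, h3, h4, X, hX1, hX2, φ, e0.trans F0, ?_⟩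
  intro p
  have h := hF0 (e0 p.1, e0 p.2)
  have h2' : s' (e0 p.1, e0 p.2) = (e0 (s p).1, e0 (s p).2) := by
    have := hs' p.1 p.2
    rwa [Prod.mk.eta] at this
  rw [h2'] at h
  exact h

end PE
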